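/- Let n ≥ 1, c > 0, ν ≥ 0, γ ∈ ℝ, ρ₀ > 0, and let Φ be a C⁴ function of (τ, z, y) ∈ ℝ × ℝ × ℝ^{n−1}. Define u(t, x₁, x') = Φ(t − x₁/c, ε x₁, √ε x'). Then the Kuznetsov operator applied to u satisfies ∂²_t u − c²Δu − ε∂_t((∇u)² + ((γ−1)/(2c²))(∂_t u)² + (ν/ρ₀)Δu) = ε[2c ∂²_{τz}Φ − ((γ+1)/(2c²))∂_τ(∂_τΦ)² − (ν/(ρ₀c²))∂³_τΦ − c²Δ_yΦ] + ε² R, where R = −c²∂²_zΦ + (2/c)∂_τ(∂_τΦ ∂_zΦ) − ∂_τ(∇_yΦ)² + (2ν/(cρ₀))∂²_τ∂_zΦ − (ν/ρ₀)∂_τΔ_yΦ + ε(−∂_τ(∂_zΦ)² − (ν/ρ₀)∂_τ∂²_zΦ). -/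

import Mathlib

set_option maxHeartbeats 1000000
noncomputable section

abbrev Esp (m : ℕ) := EuclideanSpace ℝ (Fin m)

def elap {m : ℕ} (f : Esp m → ℝ) (x : Esp m) : ℝ :=
  ∑ i, fderiv ℝ (fun y => fderiv ℝ f y (EuclideanSpace.single i 1)) x
    (EuclideanSpace.single i 1)

namespace KZKaux

abbrev PS (m : ℕ) := ℝ × ℝ × Esp m

variable {m : ℕ} {F : PS m → ℝ}

/-- chain rule along a curve -/
theorem key {H : Type*} [NormedAddCommGroup H] [NormedSpace ℝ H]
    {G : PS m → H} {ℓ : ℝ → PS m} {v : PS m} {s : ℝ} {q : PS m}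
    (hG : DifferentiableAt ℝ G q) (hℓ : HasDerivAt ℓ v s) (hq : ℓ s = q) :
    HasDerivAt (fun a => G (ℓ a)) (fderiv ℝ G q v) s := by
  subst hq
  exact hG.hasFDerivAt.comp_hasDerivAt s hℓ

theorem hF1 (hF : ContDiff ℝ 4 F) : Differentiable ℝ F :=
  hF.differentiable (by norm_num)

theorem hFd (hF : ContDiff ℝ 4 F) : Differentiable ℝ (fderiv ℝ F) :=
  (hF.fderiv_right (m := 3) (by norm_num)).differentiable (by norm_num)

theorem hFdd (hF : ContDiff ℝ 4 F) : Differentiable ℝ (fderiv ℝ (fderiv ℝ F)) :=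
  ((hF.fderiv_right (m := 3) (by norm_num)).fderiv_right (m := 2)
    (by norm_num)).differentiable (by norm_num)

theorem diff_app1 (hF : ContDiff ℝ 4 F) (v : PS m) :
    Differentiable ℝ (fun q => fderiv ℝ F q v) := fun q =>
  ((ContinuousLinearMap.apply ℝ ℝ v).differentiable.comp (hFd hF)) q

theorem diff_app2 (hF : ContDiff ℝ 4 F) (v w : PS m) :
    Differentiable ℝ (fun q => fderiv ℝ (fderiv ℝ F) q v w) := by
  have h2 : Differentiable ℝ (fun q => fderiv ℝ (fderiv ℝ F) q v) := fun q =>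
    ((hFdd hF) q).clm_apply (differentiableAt_const v)
  have h3 : Differentiable ℝ (fun q => fderiv ℝ (fderiv ℝ F) q v w) := fun q =>
    (h2 q).clm_apply (differentiableAt_const w)
  exact h3

theorem keyA (hF : ContDiff ℝ 4 F) {ℓ : ℝ → PS m} {w : PS m} {s : ℝ} {q : PS m}
    (hℓ : HasDerivAt ℓ w s) (hq : ℓ s = q) (v : PS m) :
    HasDerivAt (fun a => fderiv ℝ F (ℓ a) v) (fderiv ℝ (fderiv ℝ F) q w v) s := by
  subst hq
  have hc : HasDerivAt (fun a => fderiv ℝ F (ℓ a)) (fderiv ℝ (fderiv ℝ F) (ℓ s) w) s :=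
    (((hFd hF) (ℓ s)).hasFDerivAt).comp_hasDerivAt s hℓ
  simpa using hc.clm_apply (hasDerivAt_const s v)

theorem keyB (hF : ContDiff ℝ 4 F) {ℓ : ℝ → PS m} {x : PS m} {s : ℝ} {q : PS m}
    (hℓ : HasDerivAt ℓ x s) (hq : ℓ s = q) (v w : PS m) :
    HasDerivAt (fun a => fderiv ℝ (fderiv ℝ F) (ℓ a) v w)
      (fderiv ℝ (fun r => fderiv ℝ (fderiv ℝ F) r v w) q x) s :=
  key (diff_app2 hF v w q) hℓ hq

theorem sym2 (hF : ContDiff ℝ 4 F) (q v w : PS m) :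
    fderiv ℝ (fderiv ℝ F) q v w = fderiv ℝ (fderiv ℝ F) q w v :=
  second_derivative_symmetric (fun y => ((hF1 hF) y).hasFDerivAt)
    ((hFd hF) q).hasFDerivAt v w


/-! ### lines -/

theorem lineT (z : ℝ) (y : Esp m) (a : ℝ) :
    HasDerivAt (fun b : ℝ => ((b, z, y) : PS m)) ((1:ℝ),(0:ℝ),(0:Esp m)) a :=
  (hasDerivAt_id a).prodMk ((hasDerivAt_const a z).prodMk (hasDerivAt_const a y))

theorem lineZ (τ : ℝ) (y : Esp m) (b : ℝ) :
    HasDerivAt (fun a : ℝ => ((τ, a, y) : PS m)) ((0:ℝ),(1:ℝ),(0:Esp m)) b :=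
  (hasDerivAt_const b τ).prodMk ((hasDerivAt_id b).prodMk (hasDerivAt_const b y))

theorem lineTau (x₁ c z : ℝ) (y : Esp m) (s : ℝ) :
    HasDerivAt (fun b : ℝ => ((b - x₁/c, z, y) : PS m)) ((1:ℝ),(0:ℝ),(0:Esp m)) s :=
  ((hasDerivAt_id s).sub_const (x₁/c)).prodMk ((hasDerivAt_const s z).prodMk (hasDerivAt_const s y))

theorem lineX (c ε s : ℝ) (y : Esp m) (x₁ : ℝ) :
    HasDerivAt (fun a : ℝ => ((s - a/c, ε*a, y) : PS m)) (-(1/c), ε, (0:Esp m)) x₁ :=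
  (((hasDerivAt_id x₁).div_const c).const_sub s).prodMk
    ((show HasDerivAt (fun a : ℝ => ε*a) ε x₁ by
      simpa using (hasDerivAt_id x₁).const_mul ε).prodMk (hasDerivAt_const x₁ y))

/-! ### slices in the transverse variable -/

def J (m : ℕ) : Esp m →L[ℝ] PS m :=
  (0 : Esp m →L[ℝ] ℝ).prod ((0 : Esp m →L[ℝ] ℝ).prod (ContinuousLinearMap.id ℝ (Esp m)))

@[simp] theorem J_apply (η : Esp m) : J m η = ((0:ℝ),(0:ℝ),η) := rfl

def JS (m : ℕ) (r : ℝ) : Esp m →L[ℝ] PS m :=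
  (0 : Esp m →L[ℝ] ℝ).prod ((0 : Esp m →L[ℝ] ℝ).prod (r • ContinuousLinearMap.id ℝ (Esp m)))

@[simp] theorem JS_apply (r : ℝ) (η : Esp m) : JS m r η = ((0:ℝ),(0:ℝ),r • η) := rfl

theorem lineE (a z : ℝ) (y : Esp m) :
    HasFDerivAt (fun d : Esp m => ((a, z, d) : PS m)) (J m) y :=
  (hasFDerivAt_const a y).prodMk ((hasFDerivAt_const z y).prodMk (hasFDerivAt_id y))

theorem lineES (r a z : ℝ) (y : Esp m) :
    HasFDerivAt (fun d : Esp m => ((a, z, r • d) : PS m)) (JS m r) y :=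
  (hasFDerivAt_const a y).prodMk ((hasFDerivAt_const z y).prodMk ((hasFDerivAt_id y).const_smul r))

theorem tuple_smul (r : ℝ) (η : Esp m) :
    ((0:ℝ),(0:ℝ),r • η) = r • (((0:ℝ),(0:ℝ),η) : PS m) := by
  simp [Prod.smul_mk]

theorem slice_hasFDerivAt (hF : ContDiff ℝ 4 F) (a z : ℝ) (y : Esp m) :
    HasFDerivAt (fun d => F (a, z, d)) ((fderiv ℝ F (a,z,y)).comp (J m)) y :=
  ((hF1 hF) _).hasFDerivAt.comp y (lineE a z y)

theorem slice_fderiv_apply (hF : ContDiff ℝ 4 F) (a z : ℝ) (y η : Esp m) :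
    fderiv ℝ (fun d => F (a, z, d)) y η = fderiv ℝ F (a,z,y) ((0:ℝ),(0:ℝ),η) := by
  rw [(slice_hasFDerivAt hF a z y).fderiv]
  simp

theorem sliceS_hasFDerivAt (hF : ContDiff ℝ 4 F) (r a z : ℝ) (y : Esp m) :
    HasFDerivAt (fun d => F (a, z, r • d)) ((fderiv ℝ F (a,z,r • y)).comp (JS m r)) y :=
  ((hF1 hF) _).hasFDerivAt.comp y (lineES r a z y)

theorem sliceS_fderiv_apply (hF : ContDiff ℝ 4 F) (r a z : ℝ) (y η : Esp m) :
    fderiv ℝ (fun d => F (a, z, r • d)) y η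
      = r * fderiv ℝ F (a,z,r • y) ((0:ℝ),(0:ℝ),η) := by
  rw [(sliceS_hasFDerivAt hF r a z y).fderiv]
  have : ((fderiv ℝ F (a,z,r • y)).comp (JS m r)) η
      = fderiv ℝ F (a,z,r • y) ((0:ℝ),(0:ℝ),r • η) := by simp
  rw [this, tuple_smul, map_smul, smul_eq_mul]

theorem slice2_hasFDerivAt (hF : ContDiff ℝ 4 F) (a z : ℝ) (y : Esp m) (v : PS m) :
    HasFDerivAt (fun y' => fderiv ℝ F (a, z, y') v)
      (((fderiv ℝ F (a,z,y)).comp (0 : Esp m →L[ℝ] PS m)) +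
        (((fderiv ℝ (fderiv ℝ F) (a,z,y)).comp (J m)).flip v)) y := by
  have hcurve : HasFDerivAt (fun y' : Esp m => fderiv ℝ F (a,z,y'))
      ((fderiv ℝ (fderiv ℝ F) (a,z,y)).comp (J m)) y :=
    ((hFd hF) _).hasFDerivAt.comp y (lineE a z y)
  simpa using hcurve.clm_apply (hasFDerivAt_const v y)

theorem slice2_fderiv_apply (hF : ContDiff ℝ 4 F) (a z : ℝ) (y : Esp m) (v : PS m) (η : Esp m) :
    fderiv ℝ (fun y' => fderiv ℝ F (a, z, y') v) y η
      = fderiv ℝ (fderiv ℝ F) (a,z,y) ((0:ℝ),(0:ℝ),η) v := by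
  rw [(slice2_hasFDerivAt hF a z y v).fderiv]
  simp

theorem slice2S_fderiv_apply (hF : ContDiff ℝ 4 F) (r a z : ℝ) (y : Esp m) (v : PS m) (η : Esp m) :
    fderiv ℝ (fun y' => fderiv ℝ F (a, z, r • y') v) y η
      = r * fderiv ℝ (fderiv ℝ F) (a,z,r • y) ((0:ℝ),(0:ℝ),η) v := by
  have hcurve : HasFDerivAt (fun y' : Esp m => fderiv ℝ F (a,z,r • y'))
      ((fderiv ℝ (fderiv ℝ F) (a,z,r • y)).comp (JS m r)) y :=
    ((hFd hF) _).hasFDerivAt.comp y (lineES r a z y)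
  have h := hcurve.clm_apply (hasFDerivAt_const v y)
  rw [h.fderiv]
  have e1 : ((fderiv ℝ F (a,z,r • y)).comp (0 : Esp m →L[ℝ] PS m) +
      ((fderiv ℝ (fderiv ℝ F) (a,z,r • y)).comp (JS m r)).flip v) η
      = fderiv ℝ (fderiv ℝ F) (a,z,r • y) ((0:ℝ),(0:ℝ),r • η) v := by
    simp
  rw [e1, tuple_smul, map_smul, ContinuousLinearMap.smul_apply, smul_eq_mul]


/-! ### Laplacians -/

theorem elap_eq (hF : ContDiff ℝ 4 F) (a z : ℝ) (y : Esp m) :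
    elap (fun d => F (a, z, d)) y
      = ∑ i, fderiv ℝ (fderiv ℝ F) (a,z,y)
          ((0:ℝ),(0:ℝ),EuclideanSpace.single i 1) ((0:ℝ),(0:ℝ),EuclideanSpace.single i 1) := by
  unfold elap
  refine Finset.sum_congr rfl fun i _ => ?_
  have hfun : (fun y' => fderiv ℝ (fun d => F (a,z,d)) y' (EuclideanSpace.single i 1))
      = fun y' => fderiv ℝ F (a,z,y') ((0:ℝ),(0:ℝ),EuclideanSpace.single i 1) :=
    funext fun y' => slice_fderiv_apply hF a z y' _
  rw [hfun, slice2_fderiv_apply hF a z y _ _]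

theorem elap_scaled (hF : ContDiff ℝ 4 F) {ε : ℝ} (hε : 0 ≤ ε) (a z : ℝ) (x' : Esp m) :
    elap (fun d => F (a, z, Real.sqrt ε • d)) x'
      = ε * ∑ i, fderiv ℝ (fderiv ℝ F) (a, z, Real.sqrt ε • x')
          ((0:ℝ),(0:ℝ),EuclideanSpace.single i 1) ((0:ℝ),(0:ℝ),EuclideanSpace.single i 1) := by
  unfold elap
  rw [Finset.mul_sum]
  refine Finset.sum_congr rfl fun i _ => ?_
  have hfun : (fun y' => fderiv ℝ (fun d => F (a,z,Real.sqrt ε • d)) y' (EuclideanSpace.single i 1))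
      = fun y' => Real.sqrt ε *
          fderiv ℝ F (a,z,Real.sqrt ε • y') ((0:ℝ),(0:ℝ),EuclideanSpace.single i 1) :=
    funext fun y' => sliceS_fderiv_apply hF _ a z y' _
  rw [hfun]
  have hg : DifferentiableAt ℝ
      (fun y' : Esp m => fderiv ℝ F (a,z,Real.sqrt ε • y')
        ((0:ℝ),(0:ℝ),EuclideanSpace.single i 1)) x' := by
    have hcurve : HasFDerivAt (fun y' : Esp m => fderiv ℝ F (a,z,Real.sqrt ε • y'))
        ((fderiv ℝ (fderiv ℝ F) (a,z,Real.sqrt ε • x')).comp (JS m (Real.sqrt ε))) x' :=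
      ((hFd hF) _).hasFDerivAt.comp x' (lineES _ a z x')
    exact (hcurve.clm_apply (hasFDerivAt_const _ x')).differentiableAt
  rw [fderiv_const_mul hg, ContinuousLinearMap.smul_apply, smul_eq_mul,
    slice2S_fderiv_apply hF _ a z x' _ _, ← mul_assoc, Real.mul_self_sqrt hε]

/-! ### gradients -/

theorem grad_scaled (hF : ContDiff ℝ 4 F) {ε : ℝ} (hε : 0 ≤ ε) (a z : ℝ) (x' : Esp m) :
    ‖gradient (fun d => F (a, z, Real.sqrt ε • d)) x'‖^2
      = ε * ‖gradient (fun d => F (a, z, d)) (Real.sqrt ε • x')‖^2 := by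
  have h1 : fderiv ℝ (fun d => F (a,z,Real.sqrt ε • d)) x'
      = Real.sqrt ε • fderiv ℝ (fun d => F (a,z,d)) (Real.sqrt ε • x') := by
    rw [(sliceS_hasFDerivAt hF _ a z x').fderiv,
      (slice_hasFDerivAt hF a z (Real.sqrt ε • x')).fderiv]
    ext η
    simp only [ContinuousLinearMap.comp_apply, ContinuousLinearMap.smul_apply, JS_apply, J_apply]
    rw [tuple_smul, map_smul]
  rw [gradient, gradient, h1, map_smul, norm_smul]
  simp [mul_pow, Real.sq_sqrt hε, Real.norm_eq_abs, sq_abs]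

theorem grad_diff (hF : ContDiff ℝ 4 F) (z : ℝ) (y : Esp m) :
    Differentiable ℝ (fun a : ℝ => ‖gradient (fun d => F (a, z, d)) y‖^2) := by
  have h0 : (fun a : ℝ => ‖gradient (fun d => F (a, z, d)) y‖^2)
      = fun a : ℝ => ‖(InnerProductSpace.toDual ℝ (Esp m)).symm
          ((fderiv ℝ F (a,z,y)).comp (J m))‖^2 := by
    funext a
    rw [gradient, (slice_hasFDerivAt hF a z y).fderiv]
  rw [h0]
  have hcurve : Differentiable ℝ (fun a : ℝ => fderiv ℝ F (a,z,y)) := fun a =>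
    (((hFd hF) _).hasFDerivAt.comp_hasDerivAt a (lineT z y a)).differentiableAt
  have hcomp : Differentiable ℝ (fun a : ℝ => (fderiv ℝ F (a,z,y)).comp (J m)) :=
    hcurve.clm_comp (differentiable_const (J m))
  have hdual : Differentiable ℝ (fun a : ℝ => (InnerProductSpace.toDual ℝ (Esp m)).symm
      ((fderiv ℝ F (a,z,y)).comp (J m))) :=
    (InnerProductSpace.toDual ℝ (Esp m)).symm.differentiable.comp hcomp
  exact hdual.norm_sq (𝕜 := ℝ)

end KZKaux

open KZKaux

theorem stmt_15 (m : ℕ) (c ν γ ρ₀ ε : ℝ) (hc : 0 < c) (hρ₀ : 0 < ρ₀) (hν : 0 ≤ ν)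
    (hε : 0 < ε)
    (Φ : ℝ → ℝ → Esp m → ℝ)
    (hΦ : ContDiff ℝ 4 (fun q : ℝ × ℝ × Esp m => Φ q.1 q.2.1 q.2.2))
    (u : ℝ → ℝ → Esp m → ℝ)
    (hu : ∀ (t x₁ : ℝ) (x' : Esp m),
      u t x₁ x' = Φ (t - x₁ / c) (ε * x₁) (Real.sqrt ε • x')) :
    ∀ (t x₁ : ℝ) (x' : Esp m), ∀ τ z : ℝ, ∀ y : Esp m,
      τ = t - x₁ / c → z = ε * x₁ → y = Real.sqrt ε • x' →
      -- Kuznetsov operator applied to `u`, at `(t, x₁, x')`: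
      deriv (fun a => deriv (fun b => u b x₁ x') a) t
        - c^2 * (deriv (fun a => deriv (fun b => u t b x') a) x₁
                  + elap (fun a => u t x₁ a) x')
        - ε * deriv (fun s =>
            ((deriv (fun a => u s a x') x₁)^2
              + ‖gradient (fun a => u s x₁ a) x'‖^2)
            + (γ - 1) / (2 * c^2) * (deriv (fun b => u b x₁ x') s)^2
            + ν / ρ₀ * (deriv (fun a => deriv (fun b => u s b x') a) x₁
                          + elap (fun a => u s x₁ a) x')) t
      = ε * (2 * c * deriv (fun a => deriv (fun b => Φ b a y) τ) z
              - (γ + 1) / (2 * c^2) * deriv (fun a => (deriv (fun b => Φ b z y) a)^2) τ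
              - ν / (ρ₀ * c^2)
                  * deriv (fun a => deriv (fun b => deriv (fun d => Φ d z y) b) a) τ
              - c^2 * elap (fun d => Φ τ z d) y)
        + ε^2 * (-(c^2) * deriv (fun a => deriv (fun b => Φ τ b y) a) z
              + (2 / c) * deriv (fun a =>
                  deriv (fun b => Φ b z y) a * deriv (fun b => Φ a b y) z) τ
              - deriv (fun a => ‖gradient (fun d => Φ a z d) y‖^2) τ
              + 2 * ν / (c * ρ₀)
                  * deriv (fun a => deriv (fun b => deriv (fun d => Φ b d y) z) a) τ
              - ν / ρ₀ * deriv (fun a => elap (fun d => Φ a z d) y) τ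
              + ε * (-(deriv (fun a => (deriv (fun b => Φ a b y) z)^2) τ)
                  - ν / ρ₀
                      * deriv (fun a => deriv (fun b => deriv (fun d => Φ a d y) b) z) τ)) := by
  intro t x₁ x' τ z y hτ hz hy
  subst hτ; subst hz; subst hy
  obtain ⟨F, hF, hPF⟩ : ∃ F : PS m → ℝ, ContDiff ℝ 4 F ∧
      ∀ (a b : ℝ) (y : Esp m), Φ a b y = F (a,b,y) := ⟨_, hΦ, fun _ _ _ => rfl⟩
  simp only [hu, hPF]
  -- first-level derivative rewrites
  have h1 : deriv (fun b => F (b - x₁ / c, ε * x₁, Real.sqrt ε • x'))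
      = fun a => fderiv ℝ F (a - x₁/c, ε*x₁, Real.sqrt ε • x') ((1:ℝ),(0:ℝ),(0:Esp m)) :=
    funext fun a => (key ((hF1 hF) _) (lineTau x₁ c (ε*x₁) (Real.sqrt ε • x') a) rfl).deriv
  have h2 : ∀ s : ℝ, deriv (fun a => F (s - a / c, ε * a, Real.sqrt ε • x'))
      = fun a => fderiv ℝ F (s - a/c, ε*a, Real.sqrt ε • x') (-(1/c), ε, (0:Esp m)) :=
    fun s => funext fun a => (key ((hF1 hF) _) (lineX c ε s (Real.sqrt ε • x') a) rfl).deriv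
  have h3 : ∀ a : ℝ, ‖gradient (fun d => F (a, ε * x₁, Real.sqrt ε • d)) x'‖^2
      = ε * ‖gradient (fun d => F (a, ε*x₁, d)) (Real.sqrt ε • x')‖^2 :=
    fun a => grad_scaled hF hε.le a _ x'
  have h4 : ∀ a : ℝ, elap (fun d => F (a, ε * x₁, Real.sqrt ε • d)) x'
      = ε * ∑ i, fderiv ℝ (fderiv ℝ F) (a, ε*x₁, Real.sqrt ε • x')
          ((0:ℝ),(0:ℝ),EuclideanSpace.single i 1) ((0:ℝ),(0:ℝ),EuclideanSpace.single i 1) :=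
    fun a => elap_scaled hF hε.le a _ x'
  have h5 : ∀ a : ℝ, elap (fun d => F (a, ε * x₁, d)) (Real.sqrt ε • x')
      = ∑ i, fderiv ℝ (fderiv ℝ F) (a, ε*x₁, Real.sqrt ε • x')
          ((0:ℝ),(0:ℝ),EuclideanSpace.single i 1) ((0:ℝ),(0:ℝ),EuclideanSpace.single i 1) :=
    fun a => elap_eq hF a _ _
  have h6 : ∀ z' : ℝ, deriv (fun b => F (b, z', Real.sqrt ε • x'))
      = fun a => fderiv ℝ F (a, z', Real.sqrt ε • x') ((1:ℝ),(0:ℝ),(0:Esp m)) :=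
    fun z' => funext fun a => (key ((hF1 hF) _) (lineT z' (Real.sqrt ε • x') a) rfl).deriv
  have h7 : ∀ a' : ℝ, deriv (fun b => F (a', b, Real.sqrt ε • x'))
      = fun b => fderiv ℝ F (a', b, Real.sqrt ε • x') ((0:ℝ),(1:ℝ),(0:Esp m)) :=
    fun a' => funext fun b => (key ((hF1 hF) _) (lineZ a' (Real.sqrt ε • x') b) rfl).deriv
  simp only [h1, h2, h3, h4, h5, h6, h7]
  -- second-level rewrites
  have G1 : deriv (fun a => fderiv ℝ F (a - x₁ / c, ε * x₁, Real.sqrt ε • x') ((1:ℝ),(0:ℝ),(0:Esp m))) t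
      = fderiv ℝ (fderiv ℝ F) (t - x₁/c, ε*x₁, Real.sqrt ε • x')
          ((1:ℝ),(0:ℝ),(0:Esp m)) ((1:ℝ),(0:ℝ),(0:Esp m)) :=
    (keyA hF (lineTau x₁ c (ε*x₁) (Real.sqrt ε • x') t) rfl _).deriv
  have G2 : ∀ s : ℝ, deriv (fun a => fderiv ℝ F (s - a / c, ε * a, Real.sqrt ε • x')
        (-(1/c), ε, (0:Esp m))) x₁
      = fderiv ℝ (fderiv ℝ F) (s - x₁/c, ε*x₁, Real.sqrt ε • x')
          (-(1/c), ε, (0:Esp m)) (-(1/c), ε, (0:Esp m)) :=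
    fun s => (keyA hF (lineX c ε s (Real.sqrt ε • x') x₁) rfl _).deriv
  have G3 : deriv (fun a => fderiv ℝ F (t - x₁/c, a, Real.sqrt ε • x') ((1:ℝ),(0:ℝ),(0:Esp m))) (ε*x₁)
      = fderiv ℝ (fderiv ℝ F) (t - x₁/c, ε*x₁, Real.sqrt ε • x')
          ((1:ℝ),(0:ℝ),(0:Esp m)) ((0:ℝ),(1:ℝ),(0:Esp m)) := by
    rw [(keyA hF (lineZ (t - x₁/c) (Real.sqrt ε • x') (ε*x₁)) rfl
      ((1:ℝ),(0:ℝ),(0:Esp m))).deriv]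
    exact sym2 hF _ _ _
  have G4 : deriv (fun b => fderiv ℝ F (b, ε * x₁, Real.sqrt ε • x') ((1:ℝ),(0:ℝ),(0:Esp m)))
      = fun a => fderiv ℝ (fderiv ℝ F) (a, ε*x₁, Real.sqrt ε • x')
          ((1:ℝ),(0:ℝ),(0:Esp m)) ((1:ℝ),(0:ℝ),(0:Esp m)) :=
    funext fun a => (keyA hF (lineT (ε*x₁) (Real.sqrt ε • x') a) rfl _).deriv
  have G5 : deriv (fun a => fderiv ℝ F (t - x₁/c, a, Real.sqrt ε • x') ((0:ℝ),(1:ℝ),(0:Esp m))) (ε*x₁)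
      = fderiv ℝ (fderiv ℝ F) (t - x₁/c, ε*x₁, Real.sqrt ε • x')
          ((0:ℝ),(1:ℝ),(0:Esp m)) ((0:ℝ),(1:ℝ),(0:Esp m)) :=
    (keyA hF (lineZ (t - x₁/c) (Real.sqrt ε • x') (ε*x₁)) rfl _).deriv
  have G6 : deriv (fun b => fderiv ℝ F (b, ε * x₁, Real.sqrt ε • x') ((0:ℝ),(1:ℝ),(0:Esp m)))
      = fun a => fderiv ℝ (fderiv ℝ F) (a, ε*x₁, Real.sqrt ε • x')
          ((1:ℝ),(0:ℝ),(0:Esp m)) ((0:ℝ),(1:ℝ),(0:Esp m)) :=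
    funext fun a => (keyA hF (lineT (ε*x₁) (Real.sqrt ε • x') a) rfl _).deriv
  have G7 : ∀ a : ℝ, deriv (fun b => fderiv ℝ F (a, b, Real.sqrt ε • x')
        ((0:ℝ),(1:ℝ),(0:Esp m))) (ε*x₁)
      = fderiv ℝ (fderiv ℝ F) (a, ε*x₁, Real.sqrt ε • x')
          ((0:ℝ),(1:ℝ),(0:Esp m)) ((0:ℝ),(1:ℝ),(0:Esp m)) :=
    fun a => (keyA hF (lineZ a (Real.sqrt ε • x') (ε*x₁)) rfl _).deriv
  simp only [G1, G2, G3, G4, G5, G6, G7]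
  -- expand the direction (-(1/c), ε, 0) by linearity
  have hv : (-(1/c), ε, (0:Esp m)) = (-(1/c)) • (((1:ℝ),(0:ℝ),(0:Esp m)) : PS m)
      + ε • (((0:ℝ),(1:ℝ),(0:Esp m)) : PS m) := by
    simp [Prod.ext_iff]
  have hW1 : ∀ q : PS m, fderiv ℝ F q (-(1/c), ε, (0:Esp m))
      = -(1/c) * fderiv ℝ F q ((1:ℝ),(0:ℝ),(0:Esp m))
        + ε * fderiv ℝ F q ((0:ℝ),(1:ℝ),(0:Esp m)) := by
    intro q
    rw [hv, map_add, map_smul, map_smul, smul_eq_mul, smul_eq_mul]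
  have hW2 : ∀ q : PS m, fderiv ℝ (fderiv ℝ F) q (-(1/c), ε, (0:Esp m)) (-(1/c), ε, (0:Esp m))
      = 1/c^2 * fderiv ℝ (fderiv ℝ F) q ((1:ℝ),(0:ℝ),(0:Esp m)) ((1:ℝ),(0:ℝ),(0:Esp m))
        - 2*ε/c * fderiv ℝ (fderiv ℝ F) q ((1:ℝ),(0:ℝ),(0:Esp m)) ((0:ℝ),(1:ℝ),(0:Esp m))
        + ε^2 * fderiv ℝ (fderiv ℝ F) q ((0:ℝ),(1:ℝ),(0:Esp m)) ((0:ℝ),(1:ℝ),(0:Esp m)) := by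
    intro q
    rw [hv, map_add, map_smul, map_smul]
    simp only [ContinuousLinearMap.add_apply, ContinuousLinearMap.smul_apply, map_add,
      map_smul, smul_eq_mul]
    rw [sym2 hF q ((0:ℝ),(1:ℝ),(0:Esp m)) ((1:ℝ),(0:ℝ),(0:Esp m))]
    ring
  simp only [hW1, hW2]
  -- building blocks at the base point
  have pft := keyA hF (lineTau x₁ c (ε*x₁) (Real.sqrt ε • x') t) rfl ((1:ℝ),(0:ℝ),(0:Esp m))
  have pfz := keyA hF (lineTau x₁ c (ε*x₁) (Real.sqrt ε • x') t) rfl ((0:ℝ),(1:ℝ),(0:Esp m))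
  have p2tt := keyB hF (lineTau x₁ c (ε*x₁) (Real.sqrt ε • x') t) rfl
    ((1:ℝ),(0:ℝ),(0:Esp m)) ((1:ℝ),(0:ℝ),(0:Esp m))
  have p2tz := keyB hF (lineTau x₁ c (ε*x₁) (Real.sqrt ε • x') t) rfl
    ((1:ℝ),(0:ℝ),(0:Esp m)) ((0:ℝ),(1:ℝ),(0:Esp m))
  have p2zz := keyB hF (lineTau x₁ c (ε*x₁) (Real.sqrt ε • x') t) rfl
    ((0:ℝ),(1:ℝ),(0:Esp m)) ((0:ℝ),(1:ℝ),(0:Esp m))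
  have psum : HasDerivAt (fun s => ∑ i : Fin m, fderiv ℝ (fderiv ℝ F)
        (s - x₁/c, ε*x₁, Real.sqrt ε • x')
        ((0:ℝ),(0:ℝ),EuclideanSpace.single i 1) ((0:ℝ),(0:ℝ),EuclideanSpace.single i 1))
      (∑ i : Fin m, fderiv ℝ (fun r => fderiv ℝ (fderiv ℝ F) r
        ((0:ℝ),(0:ℝ),EuclideanSpace.single i 1) ((0:ℝ),(0:ℝ),EuclideanSpace.single i 1))
        (t - x₁/c, ε*x₁, Real.sqrt ε • x') ((1:ℝ),(0:ℝ),(0:Esp m))) t :=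
    HasDerivAt.fun_sum (fun i _ => keyB hF (lineTau x₁ c (ε*x₁) (Real.sqrt ε • x') t) rfl _ _)
  have pW : HasDerivAt (fun a : ℝ => ‖gradient (fun d => F (a, ε*x₁, d)) (Real.sqrt ε • x')‖^2)
      (deriv (fun a => ‖gradient (fun d => F (a, ε*x₁, d)) (Real.sqrt ε • x')‖^2) (t - x₁/c))
      (t - x₁/c) :=
    ((grad_diff hF (ε*x₁) (Real.sqrt ε • x')) (t - x₁/c)).hasDerivAt
  have pgrad : HasDerivAt
      (fun s : ℝ => ‖gradient (fun d => F (s - x₁/c, ε*x₁, d)) (Real.sqrt ε • x')‖^2)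
      (deriv (fun a => ‖gradient (fun d => F (a, ε*x₁, d)) (Real.sqrt ε • x')‖^2) (t - x₁/c)) t := by
    have h := pW.comp t ((hasDerivAt_id' t).sub_const (x₁/c))
    simp only [mul_one] at h
    exact h
  have hbig : deriv (fun s =>
        (-(1 / c) * (fderiv ℝ F (s - x₁ / c, ε * x₁, Real.sqrt ε • x')) (1, 0, 0) +
                  ε * (fderiv ℝ F (s - x₁ / c, ε * x₁, Real.sqrt ε • x')) (0, 1, 0)) ^ 2 +
              ε * ‖gradient (fun d => F (s - x₁ / c, ε * x₁, d)) (Real.sqrt ε • x')‖ ^ 2 +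
            (γ - 1) / (2 * c ^ 2) *
              (fderiv ℝ F (s - x₁ / c, ε * x₁, Real.sqrt ε • x')) (1, 0, 0) ^ 2 +
          ν / ρ₀ *
            (1 / c ^ 2 * ((fderiv ℝ (fderiv ℝ F) (s - x₁ / c, ε * x₁, Real.sqrt ε • x'))
                  (1, 0, 0)) (1, 0, 0) -
                2 * ε / c * ((fderiv ℝ (fderiv ℝ F) (s - x₁ / c, ε * x₁, Real.sqrt ε • x'))
                  (1, 0, 0)) (0, 1, 0) +
              ε ^ 2 * ((fderiv ℝ (fderiv ℝ F) (s - x₁ / c, ε * x₁, Real.sqrt ε • x'))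
                  (0, 1, 0)) (0, 1, 0) +
              ε * ∑ i : Fin m,
                ((fderiv ℝ (fderiv ℝ F) (s - x₁ / c, ε * x₁, Real.sqrt ε • x'))
                    (0, 0, EuclideanSpace.single i 1)) (0, 0, EuclideanSpace.single i 1))) t
      = 2 * (-(1/c) * fderiv ℝ F (t - x₁/c, ε*x₁, Real.sqrt ε • x') ((1:ℝ),(0:ℝ),(0:Esp m))
              + ε * fderiv ℝ F (t - x₁/c, ε*x₁, Real.sqrt ε • x') ((0:ℝ),(1:ℝ),(0:Esp m)))
          * (-(1/c) * fderiv ℝ (fderiv ℝ F) (t - x₁/c, ε*x₁, Real.sqrt ε • x')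
                ((1:ℝ),(0:ℝ),(0:Esp m)) ((1:ℝ),(0:ℝ),(0:Esp m))
              + ε * fderiv ℝ (fderiv ℝ F) (t - x₁/c, ε*x₁, Real.sqrt ε • x')
                ((1:ℝ),(0:ℝ),(0:Esp m)) ((0:ℝ),(1:ℝ),(0:Esp m)))
        + ε * deriv (fun a => ‖gradient (fun d => F (a, ε*x₁, d)) (Real.sqrt ε • x')‖^2)
            (t - x₁/c)
        + (γ - 1) / (2 * c ^ 2) *
            (2 * fderiv ℝ F (t - x₁/c, ε*x₁, Real.sqrt ε • x') ((1:ℝ),(0:ℝ),(0:Esp m))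
              * fderiv ℝ (fderiv ℝ F) (t - x₁/c, ε*x₁, Real.sqrt ε • x')
                  ((1:ℝ),(0:ℝ),(0:Esp m)) ((1:ℝ),(0:ℝ),(0:Esp m)))
        + ν / ρ₀ *
            (1 / c ^ 2 * fderiv ℝ (fun r => fderiv ℝ (fderiv ℝ F) r
                  ((1:ℝ),(0:ℝ),(0:Esp m)) ((1:ℝ),(0:ℝ),(0:Esp m)))
                  (t - x₁/c, ε*x₁, Real.sqrt ε • x') ((1:ℝ),(0:ℝ),(0:Esp m))
              - 2 * ε / c * fderiv ℝ (fun r => fderiv ℝ (fderiv ℝ F) r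
                  ((1:ℝ),(0:ℝ),(0:Esp m)) ((0:ℝ),(1:ℝ),(0:Esp m)))
                  (t - x₁/c, ε*x₁, Real.sqrt ε • x') ((1:ℝ),(0:ℝ),(0:Esp m))
              + ε ^ 2 * fderiv ℝ (fun r => fderiv ℝ (fderiv ℝ F) r
                  ((0:ℝ),(1:ℝ),(0:Esp m)) ((0:ℝ),(1:ℝ),(0:Esp m)))
                  (t - x₁/c, ε*x₁, Real.sqrt ε • x') ((1:ℝ),(0:ℝ),(0:Esp m))
              + ε * ∑ i : Fin m, fderiv ℝ (fun r => fderiv ℝ (fderiv ℝ F) r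
                  ((0:ℝ),(0:ℝ),EuclideanSpace.single i 1) ((0:ℝ),(0:ℝ),EuclideanSpace.single i 1))
                  (t - x₁/c, ε*x₁, Real.sqrt ε • x') ((1:ℝ),(0:ℝ),(0:Esp m))) := by
    have h := (((((pft.const_mul (-(1/c))).add (pfz.const_mul ε)).pow 2).add
        (pgrad.const_mul ε)).add
          ((pft.pow 2).const_mul ((γ - 1)/(2*c^2)))).add
        (((((p2tt.const_mul (1/c^2)).sub (p2tz.const_mul (2*ε/c))).add
            (p2zz.const_mul (ε^2))).add (psum.const_mul ε)).const_mul (ν/ρ₀))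
    refine h.deriv.trans ?_
    push_cast
    simp only [Pi.add_apply]
    ring
  rw [hbig]
  -- third level evaluations on the right-hand side
  have K1 : deriv (fun a => fderiv ℝ (fderiv ℝ F) (a, ε * x₁, Real.sqrt ε • x')
        ((1:ℝ),(0:ℝ),(0:Esp m)) ((1:ℝ),(0:ℝ),(0:Esp m))) (t - x₁/c)
      = fderiv ℝ (fun r => fderiv ℝ (fderiv ℝ F) r ((1:ℝ),(0:ℝ),(0:Esp m)) ((1:ℝ),(0:ℝ),(0:Esp m)))
          (t - x₁/c, ε*x₁, Real.sqrt ε • x') ((1:ℝ),(0:ℝ),(0:Esp m)) :=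
    (keyB hF (lineT (ε*x₁) (Real.sqrt ε • x') (t - x₁/c)) rfl _ _).deriv
  have K2 : deriv (fun a => fderiv ℝ (fderiv ℝ F) (a, ε * x₁, Real.sqrt ε • x')
        ((1:ℝ),(0:ℝ),(0:Esp m)) ((0:ℝ),(1:ℝ),(0:Esp m))) (t - x₁/c)
      = fderiv ℝ (fun r => fderiv ℝ (fderiv ℝ F) r ((1:ℝ),(0:ℝ),(0:Esp m)) ((0:ℝ),(1:ℝ),(0:Esp m)))
          (t - x₁/c, ε*x₁, Real.sqrt ε • x') ((1:ℝ),(0:ℝ),(0:Esp m)) :=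
    (keyB hF (lineT (ε*x₁) (Real.sqrt ε • x') (t - x₁/c)) rfl _ _).deriv
  have K3 : deriv (fun a => fderiv ℝ (fderiv ℝ F) (a, ε * x₁, Real.sqrt ε • x')
        ((0:ℝ),(1:ℝ),(0:Esp m)) ((0:ℝ),(1:ℝ),(0:Esp m))) (t - x₁/c)
      = fderiv ℝ (fun r => fderiv ℝ (fderiv ℝ F) r ((0:ℝ),(1:ℝ),(0:Esp m)) ((0:ℝ),(1:ℝ),(0:Esp m)))
          (t - x₁/c, ε*x₁, Real.sqrt ε • x') ((1:ℝ),(0:ℝ),(0:Esp m)) :=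
    (keyB hF (lineT (ε*x₁) (Real.sqrt ε • x') (t - x₁/c)) rfl _ _).deriv
  have K4 : deriv (fun a => ∑ i : Fin m, fderiv ℝ (fderiv ℝ F) (a, ε * x₁, Real.sqrt ε • x')
        ((0:ℝ),(0:ℝ),EuclideanSpace.single i 1) ((0:ℝ),(0:ℝ),EuclideanSpace.single i 1)) (t - x₁/c)
      = ∑ i : Fin m, fderiv ℝ (fun r => fderiv ℝ (fderiv ℝ F) r
          ((0:ℝ),(0:ℝ),EuclideanSpace.single i 1) ((0:ℝ),(0:ℝ),EuclideanSpace.single i 1))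
          (t - x₁/c, ε*x₁, Real.sqrt ε • x') ((1:ℝ),(0:ℝ),(0:Esp m)) :=
    (HasDerivAt.fun_sum (fun i _ =>
      keyB hF (lineT (ε*x₁) (Real.sqrt ε • x') (t - x₁/c)) rfl _ _)).deriv
  have K5 : deriv (fun a => fderiv ℝ F (a, ε * x₁, Real.sqrt ε • x')
        ((1:ℝ),(0:ℝ),(0:Esp m)) ^ 2) (t - x₁/c)
      = 2 * fderiv ℝ F (t - x₁/c, ε*x₁, Real.sqrt ε • x') ((1:ℝ),(0:ℝ),(0:Esp m))
          * fderiv ℝ (fderiv ℝ F) (t - x₁/c, ε*x₁, Real.sqrt ε • x')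
              ((1:ℝ),(0:ℝ),(0:Esp m)) ((1:ℝ),(0:ℝ),(0:Esp m)) := by
    have h := ((keyA hF (lineT (ε*x₁) (Real.sqrt ε • x') (t - x₁/c)) rfl
      ((1:ℝ),(0:ℝ),(0:Esp m))).pow 2).deriv
    refine h.trans ?_
    push_cast
    ring
  have K6 : deriv (fun a => fderiv ℝ F (a, ε * x₁, Real.sqrt ε • x') ((1:ℝ),(0:ℝ),(0:Esp m))
        * fderiv ℝ F (a, ε * x₁, Real.sqrt ε • x') ((0:ℝ),(1:ℝ),(0:Esp m))) (t - x₁/c)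
      = fderiv ℝ (fderiv ℝ F) (t - x₁/c, ε*x₁, Real.sqrt ε • x')
            ((1:ℝ),(0:ℝ),(0:Esp m)) ((1:ℝ),(0:ℝ),(0:Esp m))
          * fderiv ℝ F (t - x₁/c, ε*x₁, Real.sqrt ε • x') ((0:ℝ),(1:ℝ),(0:Esp m))
        + fderiv ℝ F (t - x₁/c, ε*x₁, Real.sqrt ε • x') ((1:ℝ),(0:ℝ),(0:Esp m))
          * fderiv ℝ (fderiv ℝ F) (t - x₁/c, ε*x₁, Real.sqrt ε • x')
              ((1:ℝ),(0:ℝ),(0:Esp m)) ((0:ℝ),(1:ℝ),(0:Esp m)) :=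
    ((keyA hF (lineT (ε*x₁) (Real.sqrt ε • x') (t - x₁/c)) rfl ((1:ℝ),(0:ℝ),(0:Esp m))).mul
      (keyA hF (lineT (ε*x₁) (Real.sqrt ε • x') (t - x₁/c)) rfl ((0:ℝ),(1:ℝ),(0:Esp m)))).deriv
  have K7 : deriv (fun a => fderiv ℝ F (a, ε * x₁, Real.sqrt ε • x')
        ((0:ℝ),(1:ℝ),(0:Esp m)) ^ 2) (t - x₁/c)
      = 2 * fderiv ℝ F (t - x₁/c, ε*x₁, Real.sqrt ε • x') ((0:ℝ),(1:ℝ),(0:Esp m))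
          * fderiv ℝ (fderiv ℝ F) (t - x₁/c, ε*x₁, Real.sqrt ε • x')
              ((1:ℝ),(0:ℝ),(0:Esp m)) ((0:ℝ),(1:ℝ),(0:Esp m)) := by
    have h := ((keyA hF (lineT (ε*x₁) (Real.sqrt ε • x') (t - x₁/c)) rfl
      ((0:ℝ),(1:ℝ),(0:Esp m))).pow 2).deriv
    refine h.trans ?_
    push_cast
    ring
  rw [K1, K2, K3, K4, K5, K6, K7]
  have hc' : c ≠ 0 := ne_of_gt hc
  have hρ' : ρ₀ ≠ 0 := ne_of_gt hρ₀
  field_simp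
  ring

end
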